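/- arXiv:2303.17781 — 5 statements merged into one kernel-verified Lean document; each statement's English description precedes it below -/
import Mathlib

section
/- Let f : [0,∞) → ℝ be a C³ solution of f''' + c f f'' + m c (1 - (f')²) = 0 with c > 0, m > 0, f(0) = 0, f'(0) = 0, 0 < f'(z) < 1 for z > 0, f''(z) > 0 for z ≥ 0. Then f'''(z) < 0 for all z > 0. -/
open Set

/-- Self-similar boundary layer ODE: the third derivative is negative on `(0,∞)`. -/
theorem self_similar_third_deriv_neg
    (f : ℝ → ℝ) (c m : ℝ)
    (hf : ContDiff ℝ 3 f) (hc : 0 < c) (hm : 0 < m)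
    (hode : ∀ z ≥ (0:ℝ),
      deriv^[3] f z + c * f z * deriv^[2] f z + m * c * (1 - (deriv f z) ^ 2) = 0)
    (hf0 : f 0 = 0) (hf'0 : deriv f 0 = 0)
    (hrange : ∀ z > (0:ℝ), 0 < deriv f z ∧ deriv f z < 1)
    (hconv : ∀ z ≥ (0:ℝ), 0 < deriv^[2] f z) :
    ∀ z > (0:ℝ), deriv^[3] f z < 0 := by
  intro z hz
  have hdf : Differentiable ℝ f := hf.differentiable (by norm_num)
  have hfz : 0 < f z := by
    have hmono : StrictMonoOn f (Icc 0 z) := by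
      apply strictMonoOn_of_deriv_pos (convex_Icc 0 z) hdf.continuous.continuousOn
      intro x hx
      rw [interior_Icc] at hx
      exact (hrange x hx.1).1
    have := hmono (left_mem_Icc.2 hz.le) (right_mem_Icc.2 hz.le) hz
    linarith [hf0 ▸ this]
  have h1 := hode z hz.le
  have h2 := hconv z hz.le
  obtain ⟨h3, h4⟩ := hrange z hz
  have h5 : (deriv f z) ^ 2 < 1 := by nlinarith
  nlinarith [mul_pos (mul_pos hc hfz) h2, mul_pos (mul_pos hm hc) (by linarith : (0:ℝ) < 1 - (deriv f z) ^ 2)]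
end

section
/- Suppose 1 - f'(z) = C₃ exp(-C₄ z²)(1 + o(1)) as z → ∞ with C₃, C₄ > 0, f'(0) = 0, f' is strictly increasing from 0 to 1, and f'' > 0. Let η = f'(z) and Y(η) = f''(z(η)) where z(η) is the inverse function. If also f''(z) ~ 2 C₄ z (1 - f'(z)) as z → ∞, then Y(η) ~ C₅ (1-η)√(-ln(1-η)) as η → 1⁻ for some constant C₅ > 0. -/
open Set Filter

/-- Gaussian decay of `1 - f'` translates, via the Crocco transformation, into the
asymptotics `Y(η) ~ C₅ (1-η)√(-ln(1-η))` as `η → 1⁻`. -/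
theorem crocco_profile_asymptotics_near_one
    (f : ℝ → ℝ) (g : ℝ → ℝ) (C₃ C₄ : ℝ)
    (hC₃ : 0 < C₃) (hC₄ : 0 < C₄)
    (hdecay : Tendsto (fun z => (1 - deriv f z) / (C₃ * Real.exp (-C₄ * z ^ 2)))
      atTop (nhds 1))
    (hf'0 : deriv f 0 = 0)
    (hmono : StrictMonoOn (deriv f) (Ici 0))
    (hrange : ∀ z ≥ (0:ℝ), 0 ≤ deriv f z ∧ deriv f z < 1)
    (hlim : Tendsto (deriv f) atTop (nhds 1))
    (hconv : ∀ z ≥ (0:ℝ), 0 < deriv (deriv f) z)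
    (hginv : ∀ z ≥ (0:ℝ), g (deriv f z) = z)
    (hasymp : Tendsto
      (fun z => deriv (deriv f) z / (2 * C₄ * z * (1 - deriv f z)))
      atTop (nhds 1)) :
    ∃ C₅ > (0:ℝ), Tendsto
      (fun η => deriv (deriv f) (g η)
        / (C₅ * (1 - η) * Real.sqrt (-Real.log (1 - η))))
      (nhdsWithin 1 (Iio 1)) (nhds 1) := by
  set s := Real.sqrt C₄ with hs_def
  have hs0 : 0 < s := Real.sqrt_pos.mpr hC₄
  have hss : s * s = C₄ := Real.mul_self_sqrt hC₄.le
  refine ⟨2 * s, by positivity, ?_⟩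
  -- continuity of deriv f on Ici 0
  have hcont : ContinuousOn (deriv f) (Ici 0) := fun z hz =>
    ((differentiableAt_of_deriv_ne_zero (ne_of_gt (hconv z hz))).continuousAt).continuousWithinAt
  -- surjectivity onto [0,1)
  have hsurj : ∀ η ∈ Ico (0:ℝ) 1, ∃ z ≥ (0:ℝ), deriv f z = η := by
    intro η hη
    obtain ⟨b, hb0, hb⟩ : ∃ b ≥ (0:ℝ), η < deriv f b := by
      have h1 := hlim.eventually (eventually_gt_nhds hη.2)
      obtain ⟨b, hb⟩ := (h1.and (eventually_ge_atTop (0:ℝ))).exists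
      exact ⟨b, hb.2, hb.1⟩
    have := intermediate_value_Icc hb0 (hcont.mono Icc_subset_Ici_self)
    rw [hf'0] at this
    obtain ⟨z, hz, hze⟩ := this ⟨hη.1, hb.le⟩
    exact ⟨z, hz.1, hze⟩
  -- g tends to atTop
  have hg : Tendsto g (nhdsWithin (1:ℝ) (Iio 1)) atTop := by
    rw [tendsto_atTop]
    intro M
    have hM'0 : (0:ℝ) ≤ max M 0 := le_max_right _ _
    have ha : deriv f (max M 0) < 1 := (hrange _ hM'0).2
    have ha0 : 0 ≤ deriv f (max M 0) := (hrange _ hM'0).1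
    have hmem : Ioo (deriv f (max M 0)) 1 ∈ nhdsWithin (1:ℝ) (Iio 1) := by
      rw [mem_nhdsWithin]
      exact ⟨Ioi (deriv f (max M 0)), isOpen_Ioi, mem_Ioi.mpr ha, fun x hx => ⟨hx.1, hx.2⟩⟩
    filter_upwards [hmem] with η hη
    obtain ⟨z, hz0, hze⟩ := hsurj η ⟨le_of_lt (lt_of_le_of_lt ha0 hη.1), hη.2⟩
    have hgz : g η = z := by rw [← hze, hginv z hz0]
    rw [hgz]
    by_contra h
    push_neg at h
    have hzM : z < max M 0 := lt_of_lt_of_le h (le_max_left _ _)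
    have := hmono (mem_Ici.mpr hz0) (mem_Ici.mpr hM'0) hzM
    rw [hze] at this
    exact absurd hη.1 (not_lt.mpr this.le)
  -- eventual positivity facts
  have hev : ∀ᶠ z in atTop, (1:ℝ) ≤ z := eventually_ge_atTop 1
  have hupos : ∀ᶠ z in atTop, 0 < 1 - deriv f z ∧ 1 - deriv f z < 1 := by
    filter_upwards [hev] with z hz
    have hz0 : (0:ℝ) ≤ z := le_trans zero_le_one hz
    refine ⟨sub_pos.mpr (hrange z hz0).2, ?_⟩
    have : deriv f 0 < deriv f z := hmono (mem_Ici.mpr le_rfl) (mem_Ici.mpr hz0)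
      (lt_of_lt_of_le zero_lt_one hz)
    rw [hf'0] at this
    linarith
  have hrpos : ∀ᶠ z in atTop, 0 < (1 - deriv f z) / (C₃ * Real.exp (-C₄ * z ^ 2)) :=
    hdecay.eventually (eventually_gt_nhds zero_lt_one)
  -- T0 : -log u - C₄ z² → -log C₃
  have hlogr : Tendsto (fun z => Real.log ((1 - deriv f z) / (C₃ * Real.exp (-C₄ * z ^ 2))))
      atTop (nhds 0) := by
    have := (Real.continuousAt_log one_ne_zero).tendsto.comp hdecay
    simpa [Function.comp_def] using this
  have T0 : Tendsto (fun z => -Real.log (1 - deriv f z) - C₄ * z ^ 2)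
      atTop (nhds (-Real.log C₃)) := by
    have heq : (fun z => -Real.log C₃ -
          Real.log ((1 - deriv f z) / (C₃ * Real.exp (-C₄ * z ^ 2)))) =ᶠ[atTop]
        (fun z => -Real.log (1 - deriv f z) - C₄ * z ^ 2) := by
      filter_upwards [hupos, hrpos] with z hu hr
      have hden : (0:ℝ) < C₃ * Real.exp (-C₄ * z ^ 2) := by positivity
      have h1 : Real.log ((1 - deriv f z) / (C₃ * Real.exp (-C₄ * z ^ 2))) =
          Real.log (1 - deriv f z) - Real.log (C₃ * Real.exp (-C₄ * z ^ 2)) :=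
        Real.log_div hu.1.ne' hden.ne'
      have h2 : Real.log (C₃ * Real.exp (-C₄ * z ^ 2)) = Real.log C₃ + (-C₄ * z ^ 2) := by
        rw [Real.log_mul hC₃.ne' (Real.exp_ne_zero _), Real.log_exp]
      rw [h1, h2]; ring
    refine Tendsto.congr' heq ?_
    have := tendsto_const_nhds (α := ℝ) (x := -Real.log C₃) (f := atTop) |>.sub hlogr
    simpa using this
  have TzAtTop : Tendsto (fun z : ℝ => C₄ * z ^ 2) atTop atTop :=
    (tendsto_pow_atTop two_ne_zero).const_mul_atTop hC₄
  -- T1 : (-log u)/(C₄ z²) → 1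
  have T1 : Tendsto (fun z => (-Real.log (1 - deriv f z)) / (C₄ * z ^ 2)) atTop (nhds 1) := by
    have heq : (fun z => 1 + (-Real.log (1 - deriv f z) - C₄ * z ^ 2) * (C₄ * z ^ 2)⁻¹)
        =ᶠ[atTop] (fun z => (-Real.log (1 - deriv f z)) / (C₄ * z ^ 2)) := by
      filter_upwards [hev] with z hz
      have hne : C₄ * z ^ 2 ≠ 0 := by positivity
      field_simp
      ring
    refine Tendsto.congr' heq ?_
    have h2 := T0.mul TzAtTop.inv_tendsto_atTop
    have := (tendsto_const_nhds (α := ℝ) (x := 1) (f := atTop)).add h2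
    simpa using this
  -- T2 : sqrt of that → 1
  have T2 : Tendsto (fun z => Real.sqrt ((-Real.log (1 - deriv f z)) / (C₄ * z ^ 2)))
      atTop (nhds 1) := by
    have := (Real.continuous_sqrt.tendsto 1).comp T1
    simpa [Function.comp_def] using this
  -- the main limit in the z variable
  have hF : Tendsto (fun z => deriv (deriv f) z /
      (2 * s * (1 - deriv f z) * Real.sqrt (-Real.log (1 - deriv f z)))) atTop (nhds 1) := by
    have heq : (fun z => (deriv (deriv f) z / (2 * C₄ * z * (1 - deriv f z))) *
          (Real.sqrt ((-Real.log (1 - deriv f z)) / (C₄ * z ^ 2)))⁻¹) =ᶠ[atTop]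
        (fun z => deriv (deriv f) z /
          (2 * s * (1 - deriv f z) * Real.sqrt (-Real.log (1 - deriv f z)))) := by
      filter_upwards [hev, hupos] with z hz hu
      have hz0 : (0:ℝ) < z := lt_of_lt_of_le zero_lt_one hz
      have hL : 0 < -Real.log (1 - deriv f z) := by
        have := Real.log_neg hu.1 hu.2
        linarith
      have hsq : Real.sqrt ((-Real.log (1 - deriv f z)) / (C₄ * z ^ 2)) =
          Real.sqrt (-Real.log (1 - deriv f z)) / (s * z) := by
        rw [Real.sqrt_div hL.le, Real.sqrt_mul hC₄.le, Real.sqrt_sq hz0.le, hs_def]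
      rw [hsq]
      have hsL : 0 < Real.sqrt (-Real.log (1 - deriv f z)) := Real.sqrt_pos.mpr hL
      have hu0 : (1 - deriv f z) ≠ 0 := hu.1.ne'
      have hsL0 : Real.sqrt (-Real.log (1 - deriv f z)) ≠ 0 := hsL.ne'
      have hz0' : z ≠ 0 := hz0.ne'
      have hs0' : s ≠ 0 := hs0.ne'
      rw [← hss]
      rw [inv_div, div_mul_div_comm]
      rw [div_eq_div_iff (by positivity) (by positivity)]
      ring
    refine Tendsto.congr' heq ?_
    have := hasymp.mul (T2.inv₀ one_ne_zero)
    simpa using this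
  -- compose with g and transfer
  have hcomp := hF.comp hg
  refine Tendsto.congr' ?_ hcomp
  have hmem : Ioo (0:ℝ) 1 ∈ nhdsWithin (1:ℝ) (Iio 1) := by
    rw [mem_nhdsWithin]
    exact ⟨Ioi 0, isOpen_Ioi, mem_Ioi.mpr zero_lt_one, fun x hx => ⟨hx.1, hx.2⟩⟩
  filter_upwards [hmem] with η hη
  obtain ⟨z, hz0, hze⟩ := hsurj η ⟨hη.1.le, hη.2⟩
  have hgz : g η = z := by rw [← hze, hginv z hz0]
  simp only [Function.comp_apply, hgz, hze]
end

section
/- Let Y : [0,1] → ℝ be continuous with Y(1) = 0, positive and C² on [0,1), satisfying ν Y² Y'' + (η²-1) m a Y' - η ((3m-1)/2) a Y = 0 on (0,1) and ν Y(0) Y'(0) + m a = 0, where ν, a, m > 0. Suppose Y' < 0 on (0,1). Then for any two such solutions Y₁, Y₂ with the additional property that ν Yᵢ Yᵢ'' ≤ -M < 0 on [0,1) for some M > 0, we have Y₁ = Y₂. -/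
open Set

set_option maxHeartbeats 2000000 in
private lemma crocco_bvp_le
    (ν a m : ℝ) (hν : 0 < ν) (ha : 0 < a) (hm : 0 < m)
    (Y₁ Y₂ : ℝ → ℝ) (M₂ : ℝ) (hM₂ : 0 < M₂)
    (hcont₁ : ContinuousOn Y₁ (Icc 0 1)) (hcont₂ : ContinuousOn Y₂ (Icc 0 1))
    (hY₁1 : Y₁ 1 = 0) (hY₂1 : Y₂ 1 = 0)
    (hpos₁ : ∀ η ∈ Ico (0:ℝ) 1, 0 < Y₁ η)
    (hpos₂ : ∀ η ∈ Ico (0:ℝ) 1, 0 < Y₂ η)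
    (hC2₁ : ContDiffOn ℝ 2 Y₁ (Ico 0 1)) (hC2₂ : ContDiffOn ℝ 2 Y₂ (Ico 0 1))
    (hode₁ : ∀ η ∈ Ioo (0:ℝ) 1,
      ν * (Y₁ η) ^ 2 * deriv (deriv Y₁) η + (η ^ 2 - 1) * m * a * deriv Y₁ η
        - η * ((3 * m - 1) / 2) * a * Y₁ η = 0)
    (hode₂ : ∀ η ∈ Ioo (0:ℝ) 1,
      ν * (Y₂ η) ^ 2 * deriv (deriv Y₂) η + (η ^ 2 - 1) * m * a * deriv Y₂ η
        - η * ((3 * m - 1) / 2) * a * Y₂ η = 0)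
    (hbc₁ : ν * Y₁ 0 * derivWithin Y₁ (Ici 0) 0 + m * a = 0)
    (hbc₂ : ν * Y₂ 0 * derivWithin Y₂ (Ici 0) 0 + m * a = 0)
    (hdec₂ : ∀ η ∈ Ioo (0:ℝ) 1, deriv Y₂ η < 0)
    (hcurv₂ : ∀ η ∈ Ico (0:ℝ) 1, ν * Y₂ η * deriv (deriv Y₂) η ≤ -M₂) :
    ∀ x ∈ Icc (0:ℝ) 1, Y₁ x ≤ Y₂ x := by
  by_contra hcon
  push_neg at hcon
  obtain ⟨x₁, hx₁, hx₁'⟩ := hcon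
  set Z : ℝ → ℝ := fun x => Y₁ x - Y₂ x with hZdef
  have hZcont : ContinuousOn Z (Icc 0 1) := hcont₁.sub hcont₂
  obtain ⟨x₀, hx₀, hmax⟩ :=
    isCompact_Icc.exists_isMaxOn (⟨0, by norm_num⟩ : (Icc (0:ℝ) 1).Nonempty) hZcont
  have hmax' : ∀ y ∈ Icc (0:ℝ) 1, Z y ≤ Z x₀ := fun y hy => hmax hy
  have hZx₀ : 0 < Z x₀ := lt_of_lt_of_le (by simp [hZdef]; linarith) (hmax' x₁ hx₁)
  have hx₀ne1 : x₀ ≠ 1 := by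
    intro h
    rw [h] at hZx₀
    simp [hZdef, hY₁1, hY₂1] at hZx₀
  have hx₀lt1 : x₀ < 1 := lt_of_le_of_ne hx₀.2 hx₀ne1
  -- basic differentiability facts on the open interval s = Ioo 0 1
  set s : Set ℝ := Ioo 0 1 with hsdef
  have hs : IsOpen s := isOpen_Ioo
  have hC2₁s : ContDiffOn ℝ 2 Y₁ s := hC2₁.mono Ioo_subset_Ico_self
  have hC2₂s : ContDiffOn ℝ 2 Y₂ s := hC2₂.mono Ioo_subset_Ico_self
  have hd₁ : ∀ x ∈ s, DifferentiableAt ℝ Y₁ x := fun x hx =>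
    (hC2₁s.differentiableOn (by norm_num)).differentiableAt (hs.mem_nhds hx)
  have hd₂ : ∀ x ∈ s, DifferentiableAt ℝ Y₂ x := fun x hx =>
    (hC2₂s.differentiableOn (by norm_num)).differentiableAt (hs.mem_nhds hx)
  have hD₁ : ContDiffOn ℝ 1 (deriv Y₁) s := hC2₁s.deriv_of_isOpen hs (by norm_num)
  have hD₂ : ContDiffOn ℝ 1 (deriv Y₂) s := hC2₂s.deriv_of_isOpen hs (by norm_num)
  have hd₁' : ∀ x ∈ s, DifferentiableAt ℝ (deriv Y₁) x := fun x hx =>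
    (hD₁.differentiableOn one_ne_zero).differentiableAt (hs.mem_nhds hx)
  have hd₂' : ∀ x ∈ s, DifferentiableAt ℝ (deriv Y₂) x := fun x hx =>
    (hD₂.differentiableOn one_ne_zero).differentiableAt (hs.mem_nhds hx)
  set g : ℝ → ℝ := fun x => deriv Y₁ x - deriv Y₂ x with hgdef
  have hgZ : ∀ x ∈ s, deriv Z x = g x := fun x hx => deriv_sub (hd₁ x hx) (hd₂ x hx)
  have hg' : ∀ x ∈ s, deriv g x = deriv (deriv Y₁) x - deriv (deriv Y₂) x := fun x hx =>
    deriv_sub (hd₁' x hx) (hd₂' x hx)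
  have hg1 : ContDiffOn ℝ 1 g s := hD₁.sub hD₂
  have hgcont : ContinuousOn (deriv g) s := hg1.continuousOn_deriv_of_isOpen hs le_rfl
  rcases eq_or_lt_of_le hx₀.1 with h0 | hx₀pos
  · -- maximum at the left endpoint: contradiction with the Neumann boundary condition
    subst h0
    have hy₁0 : 0 < Y₁ 0 := hpos₁ 0 ⟨le_rfl, one_pos⟩
    have hy₂0 : 0 < Y₂ 0 := hpos₂ 0 ⟨le_rfl, one_pos⟩
    have hlt : Y₂ 0 < Y₁ 0 := by simpa [hZdef, sub_pos] using hZx₀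
    have hseteq : Ici (0:ℝ) =ᶠ[nhds 0] Ico (0:ℝ) 1 := by
      refine Filter.eventuallyEq_set.2 ?_
      filter_upwards [Iio_mem_nhds (zero_lt_one)] with y hy
      simp only [mem_Ici, mem_Ico]
      exact ⟨fun h => ⟨h, hy⟩, fun h => h.1⟩
    have hdw₁ : DifferentiableWithinAt ℝ Y₁ (Ici 0) 0 :=
      (differentiableWithinAt_congr_set hseteq).2
        ((hC2₁.differentiableOn (by norm_num)) 0 ⟨le_rfl, one_pos⟩)
    have hdw₂ : DifferentiableWithinAt ℝ Y₂ (Ici 0) 0 :=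
      (differentiableWithinAt_congr_set hseteq).2
        ((hC2₂.differentiableOn (by norm_num)) 0 ⟨le_rfl, one_pos⟩)
    set d₁ := derivWithin Y₁ (Ici 0) 0 with hd1def
    set d₂ := derivWithin Y₂ (Ici 0) 0 with hd2def
    have hZw : HasDerivWithinAt Z (d₁ - d₂) (Ici 0) 0 :=
      hdw₁.hasDerivWithinAt.sub hdw₂.hasDerivWithinAt
    have hmaxOn : IsLocalMaxOn Z (Ici 0) 0 := by
      have h1 : Iio (1:ℝ) ∈ nhdsWithin (0:ℝ) (Ici 0) :=
        mem_nhdsWithin_of_mem_nhds (Iio_mem_nhds zero_lt_one)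
      filter_upwards [h1, self_mem_nhdsWithin] with y hy1 hy2
      exact hmax' y ⟨hy2, le_of_lt hy1⟩
    have hy1mem : (1:ℝ) ∈ posTangentConeAt (Ici (0:ℝ)) 0 := by
      apply mem_posTangentConeAt_of_segment_subset (x := (0:ℝ)) (y := (1:ℝ))
      rw [zero_add, segment_eq_Icc zero_le_one]
      exact Icc_subset_Ici_self
    have hle := hmaxOn.hasFDerivWithinAt_nonpos hZw.hasFDerivWithinAt hy1mem
    simp only [ContinuousLinearMap.smulRight_apply, ContinuousLinearMap.one_apply, ContinuousLinearMap.toSpanSingleton_apply,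
      one_smul, smul_eq_mul, one_mul] at hle
    -- hle : d₁ - d₂ ≤ 0, but the boundary condition forces d₁ > d₂.
    have hd₂neg : d₂ < 0 := by nlinarith [mul_pos hν hy₂0, mul_pos hm ha]
    nlinarith [mul_pos hν (mul_pos (sub_pos.2 hlt) (neg_pos.2 hd₂neg)),
      mul_nonneg (mul_pos hν hy₁0).le (sub_nonneg.2 (by linarith : d₁ ≤ d₂))]
  · -- maximum at an interior point
    have hx₀s : x₀ ∈ s := ⟨hx₀pos, hx₀lt1⟩
    have hy₁ : 0 < Y₁ x₀ := hpos₁ x₀ ⟨hx₀.1, hx₀lt1⟩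
    have hy₂ : 0 < Y₂ x₀ := hpos₂ x₀ ⟨hx₀.1, hx₀lt1⟩
    have hltx : Y₂ x₀ < Y₁ x₀ := by simpa [hZdef, sub_pos] using hZx₀
    have hloc : IsLocalMax Z x₀ := by
      filter_upwards [hs.mem_nhds hx₀s] with y hy
      exact hmax' y ⟨le_of_lt hy.1, le_of_lt hy.2⟩
    have hZ'0 : deriv Z x₀ = 0 := hloc.deriv_eq_zero
    have hgx₀ : g x₀ = 0 := by rw [← hgZ x₀ hx₀s, hZ'0]
    have hp : deriv Y₁ x₀ = deriv Y₂ x₀ := by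
      have := hgx₀
      simp only [hgdef] at this
      linarith
    have hp₂neg : deriv Y₂ x₀ < 0 := hdec₂ x₀ hx₀s
    have hq₂le : ν * Y₂ x₀ * deriv (deriv Y₂) x₀ ≤ -M₂ := hcurv₂ x₀ ⟨hx₀.1, hx₀lt1⟩
    have hq₂neg : deriv (deriv Y₂) x₀ < 0 := by nlinarith [mul_pos hν hy₂]
    have he₁ := hode₁ x₀ hx₀s
    have he₂ := hode₂ x₀ hx₀s
    -- key positivity of the second derivative of the difference at the max
    have hKpos : 0 < deriv (deriv Y₁) x₀ - deriv (deriv Y₂) x₀ := by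
      rcases le_or_gt 0 ((3 * m - 1) / 2) with hc | hc
      · have I1 : ν * (Y₁ x₀) ^ 2 * (deriv (deriv Y₁) x₀ - deriv (deriv Y₂) x₀)
            = x₀ * ((3 * m - 1) / 2) * a * (Y₁ x₀ - Y₂ x₀)
              + (ν * (-(deriv (deriv Y₂) x₀))) * ((Y₁ x₀ + Y₂ x₀) * (Y₁ x₀ - Y₂ x₀)) := by
          linear_combination he₁ - he₂ - ((x₀ ^ 2 - 1) * m * a) * hp
        have A : 0 ≤ x₀ * ((3 * m - 1) / 2) * a * (Y₁ x₀ - Y₂ x₀) := by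
          have := mul_nonneg (mul_nonneg (mul_nonneg hx₀pos.le hc) ha.le)
            (sub_pos.2 hltx).le
          linarith
        have B : 0 < (ν * (-(deriv (deriv Y₂) x₀))) * ((Y₁ x₀ + Y₂ x₀) * (Y₁ x₀ - Y₂ x₀)) :=
          mul_pos (mul_pos hν (neg_pos.2 hq₂neg))
            (mul_pos (by linarith) (sub_pos.2 hltx))
        have hprod : 0 < ν * (Y₁ x₀) ^ 2
            * (deriv (deriv Y₁) x₀ - deriv (deriv Y₂) x₀) := by rw [I1]; linarith
        have hcoef : 0 < ν * (Y₁ x₀) ^ 2 := by positivity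
        by_contra h
        push_neg at h
        nlinarith [mul_nonneg hcoef.le (neg_nonneg.2 h)]
      · have I2 : ν * (Y₁ x₀) ^ 2 * (Y₂ x₀) ^ 2 * (deriv (deriv Y₁) x₀ - deriv (deriv Y₂) x₀)
            = (Y₁ x₀ - Y₂ x₀) * ((-(x₀ * ((3 * m - 1) / 2) * a)) * (Y₁ x₀ * Y₂ x₀)
              + ((1 - x₀ ^ 2) * m * a * (-(deriv Y₂ x₀))) * (Y₁ x₀ + Y₂ x₀)) := by
          linear_combination (Y₂ x₀) ^ 2 * he₁ - (Y₁ x₀) ^ 2 * he₂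
            - ((x₀ ^ 2 - 1) * m * a * (Y₂ x₀) ^ 2) * hp
        have A : 0 < (-(x₀ * ((3 * m - 1) / 2) * a)) * (Y₁ x₀ * Y₂ x₀) := by
          have h1 : 0 < -(x₀ * ((3 * m - 1) / 2) * a) := by
            nlinarith [mul_pos (mul_pos hx₀pos (by linarith : (0:ℝ) < -((3 * m - 1) / 2))) ha]
          exact mul_pos h1 (mul_pos hy₁ hy₂)
        have B : 0 < ((1 - x₀ ^ 2) * m * a * (-(deriv Y₂ x₀))) * (Y₁ x₀ + Y₂ x₀) := by
          have h1 : 0 < 1 - x₀ ^ 2 := by nlinarith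
          have h2 : 0 < (1 - x₀ ^ 2) * m * a * (-(deriv Y₂ x₀)) := by
            have := mul_pos (mul_pos (mul_pos h1 hm) ha) (neg_pos.2 hp₂neg)
            linarith
          exact mul_pos h2 (by linarith)
        have hprod : 0 < ν * (Y₁ x₀) ^ 2 * (Y₂ x₀) ^ 2
            * (deriv (deriv Y₁) x₀ - deriv (deriv Y₂) x₀) := by
          rw [I2]; exact mul_pos (sub_pos.2 hltx) (add_pos A B)
        have hcoef : 0 < ν * (Y₁ x₀) ^ 2 * (Y₂ x₀) ^ 2 := by positivity
        by_contra h
        push_neg at h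
        nlinarith [mul_nonneg hcoef.le (neg_nonneg.2 h)]
    have hKpos' : 0 < deriv g x₀ := by rw [hg' x₀ hx₀s]; exact hKpos
    -- find an interval to the right of x₀ on which deriv g > 0
    have hca : ContinuousAt (deriv g) x₀ := hgcont.continuousAt (hs.mem_nhds hx₀s)
    have hev : deriv g ⁻¹' Ioi 0 ∈ nhds x₀ := hca (Ioi_mem_nhds hKpos')
    have hmem : (deriv g ⁻¹' Ioi 0) ∩ s ∈ nhds x₀ := Filter.inter_mem hev (hs.mem_nhds hx₀s)
    obtain ⟨ε, hε, hball⟩ := Metric.mem_nhds_iff.1 hmem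
    set b := x₀ + ε / 2 with hbdef
    have hx₀b : x₀ < b := by simp [hbdef]; linarith
    have hsub : Icc x₀ b ⊆ (deriv g ⁻¹' Ioi 0) ∩ s := by
      intro y hy
      apply hball
      rw [Real.ball_eq_Ioo]
      exact ⟨by linarith [hy.1], by have := hy.2; simp [hbdef] at this ⊢; linarith⟩
    have hbs : b ∈ s := (hsub ⟨le_of_lt hx₀b, le_rfl⟩).2
    -- g is strictly increasing on [x₀, b], hence positive on (x₀, b)
    have hgmono : StrictMonoOn g (Icc x₀ b) := by
      apply strictMonoOn_of_deriv_pos (convex_Icc _ _)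
      · exact hg1.continuousOn.mono fun y hy => (hsub hy).2
      · intro y hy
        rw [interior_Icc] at hy
        exact (hsub (Ioo_subset_Icc_self hy)).1
    have hgposIoo : ∀ y ∈ Ioo x₀ b, 0 < g y := by
      intro y hy
      have := hgmono ⟨le_rfl, le_of_lt hx₀b⟩ ⟨le_of_lt hy.1, le_of_lt hy.2⟩ hy.1
      rw [hgx₀] at this
      exact this
    -- hence Z is strictly increasing on [x₀, b], contradicting maximality at x₀
    have hZmono : StrictMonoOn Z (Icc x₀ b) := by
      apply strictMonoOn_of_deriv_pos (convex_Icc _ _)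
      · refine hZcont.mono fun y hy => ?_
        have hys := (hsub hy).2
        exact ⟨le_of_lt hys.1, le_of_lt hys.2⟩
      · intro y hy
        rw [interior_Icc] at hy
        rw [hgZ y (hsub (Ioo_subset_Icc_self hy)).2]
        exact hgposIoo y hy
    have hZb : Z x₀ < Z b := hZmono ⟨le_rfl, le_of_lt hx₀b⟩ ⟨le_of_lt hx₀b, le_rfl⟩ hx₀b
    have : Z b ≤ Z x₀ := hmax' b ⟨le_of_lt hbs.1, le_of_lt hbs.2⟩
    linarith

/-- Uniqueness for the degenerate Crocco boundary value problem under a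
concavity-type bound `ν Y Y'' ≤ -M < 0`. -/
theorem crocco_bvp_uniqueness
    (ν a m : ℝ) (hν : 0 < ν) (ha : 0 < a) (hm : 0 < m)
    (Y₁ Y₂ : ℝ → ℝ) (M₁ M₂ : ℝ) (hM₁ : 0 < M₁) (hM₂ : 0 < M₂)
    (hcont₁ : ContinuousOn Y₁ (Icc 0 1)) (hcont₂ : ContinuousOn Y₂ (Icc 0 1))
    (hY₁1 : Y₁ 1 = 0) (hY₂1 : Y₂ 1 = 0)
    (hpos₁ : ∀ η ∈ Ico (0:ℝ) 1, 0 < Y₁ η)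
    (hpos₂ : ∀ η ∈ Ico (0:ℝ) 1, 0 < Y₂ η)
    (hC2₁ : ContDiffOn ℝ 2 Y₁ (Ico 0 1)) (hC2₂ : ContDiffOn ℝ 2 Y₂ (Ico 0 1))
    (hode₁ : ∀ η ∈ Ioo (0:ℝ) 1,
      ν * (Y₁ η) ^ 2 * deriv (deriv Y₁) η + (η ^ 2 - 1) * m * a * deriv Y₁ η
        - η * ((3 * m - 1) / 2) * a * Y₁ η = 0)
    (hode₂ : ∀ η ∈ Ioo (0:ℝ) 1,
      ν * (Y₂ η) ^ 2 * deriv (deriv Y₂) η + (η ^ 2 - 1) * m * a * deriv Y₂ η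
        - η * ((3 * m - 1) / 2) * a * Y₂ η = 0)
    (hbc₁ : ν * Y₁ 0 * derivWithin Y₁ (Ici 0) 0 + m * a = 0)
    (hbc₂ : ν * Y₂ 0 * derivWithin Y₂ (Ici 0) 0 + m * a = 0)
    (hdec₁ : ∀ η ∈ Ioo (0:ℝ) 1, deriv Y₁ η < 0)
    (hdec₂ : ∀ η ∈ Ioo (0:ℝ) 1, deriv Y₂ η < 0)
    (hcurv₁ : ∀ η ∈ Ico (0:ℝ) 1, ν * Y₁ η * deriv (deriv Y₁) η ≤ -M₁)
    (hcurv₂ : ∀ η ∈ Ico (0:ℝ) 1, ν * Y₂ η * deriv (deriv Y₂) η ≤ -M₂) :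
    EqOn Y₁ Y₂ (Icc 0 1) := by
  intro x hx
  have h1 := crocco_bvp_le ν a m hν ha hm Y₁ Y₂ M₂ hM₂ hcont₁ hcont₂ hY₁1 hY₂1
    hpos₁ hpos₂ hC2₁ hC2₂ hode₁ hode₂ hbc₁ hbc₂ hdec₂ hcurv₂ x hx
  have h2 := crocco_bvp_le ν a m hν ha hm Y₂ Y₁ M₁ hM₁ hcont₂ hcont₁ hY₂1 hY₁1
    hpos₂ hpos₁ hC2₂ hC2₁ hode₂ hode₁ hbc₂ hbc₁ hdec₁ hcurv₁ x hx
  exact le_antisymm h1 h2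
end

section
/- Let Y be the solution of ν Y² Y'' + (η²-1) m a Y' - η((3m-1)/2) a Y = 0 on (0,1), Y > 0, with the bounds M₅(1-η)σ(η) ≤ Y(η) ≤ M₆(1-η)σ(η), where σ(η) = √(-ln μ(1-η)), 0 < μ < 1 and M₅, M₆ > 0. Then using the formula ν Y'(η) = -m a (1-η²)/Y(η) - ((m+1)/2) a ∫_0^η s/Y(s) ds, there exist constants M₇ ≥ M₈ > 0 such that -M₇ σ(η) ≤ Y'(η) ≤ -M₈ σ(η) for all η ∈ (0,1). -/
open Set intervalIntegral

lemma crocco_aux_contOn (μ : ℝ) (hμ0 : 0 < μ) (s : ℝ) (hs : s ∈ Set.Ico (0:ℝ) 1) :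
    ContinuousAt (fun t => Real.sqrt (-Real.log (μ * (1 - t)))) s := by
  have h1s : 0 < 1 - s := by linarith [hs.2]
  have hμs : (0:ℝ) < μ * (1 - s) := by positivity
  have hinner : ContinuousAt (fun t : ℝ => μ * (1 - t)) s := by fun_prop
  have hlog : ContinuousAt (fun t : ℝ => Real.log (μ * (1 - t))) s :=
    hinner.log (ne_of_gt hμs)
  exact Real.continuous_sqrt.continuousAt.comp hlog.neg

lemma crocco_aux_hasDeriv (μ : ℝ) (hμ0 : 0 < μ) (hμ1 : μ < 1) (s : ℝ)
    (hs : s ∈ Set.Ico (0:ℝ) 1) :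
    HasDerivAt (fun t => 2 * Real.sqrt (-Real.log (μ * (1 - t))))
      (1 / ((1 - s) * Real.sqrt (-Real.log (μ * (1 - s))))) s := by
  have h1s : 0 < 1 - s := by linarith [hs.2]
  have hμs : (0:ℝ) < μ * (1 - s) := by positivity
  have hlt : μ * (1 - s) < 1 := by nlinarith [mul_nonneg hμ0.le hs.1]
  have hlog : Real.log (μ * (1 - s)) < 0 := Real.log_neg hμs hlt
  have hgpos : 0 < -Real.log (μ * (1 - s)) := by linarith
  have h0 : HasDerivAt (fun t : ℝ => μ * (1 - t)) (-μ) s := by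
    simpa using ((hasDerivAt_id s).const_sub 1).const_mul μ
  have hg : HasDerivAt (fun t : ℝ => -Real.log (μ * (1 - t))) (1 / (1 - s)) s := by
    have h1 := ((Real.hasDerivAt_log (ne_of_gt hμs)).comp s h0).neg
    refine h1.congr_deriv ?_
    field_simp
  have hsq := hg.sqrt (ne_of_gt hgpos)
  have h3 := hsq.const_mul 2
  have hσp : 0 < Real.sqrt (-Real.log (μ * (1 - s))) := Real.sqrt_pos.mpr hgpos
  refine h3.congr_deriv ?_
  field_simp

/-- Two-sided bounds `-M₇σ ≤ Y' ≤ -M₈σ` for the Crocco self-similar profile. -/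
theorem crocco_deriv_two_sided_bounds
    (Y : ℝ → ℝ) (ν a m μ M₅ M₆ : ℝ)
    (hν : 0 < ν) (ha : 0 < a) (hm : 0 < m)
    (hμ0 : 0 < μ) (hμ1 : μ < 1) (hM₅ : 0 < M₅) (hM₆ : 0 < M₆)
    (σ : ℝ → ℝ) (hσ : ∀ η, σ η = Real.sqrt (-Real.log (μ * (1 - η))))
    (hC2 : ContDiffOn ℝ 2 Y (Ico 0 1))
    (hpos : ∀ η ∈ Ico (0:ℝ) 1, 0 < Y η)
    (hode : ∀ η ∈ Ioo (0:ℝ) 1,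
      ν * (Y η) ^ 2 * deriv (deriv Y) η + (η ^ 2 - 1) * m * a * deriv Y η
        - η * ((3 * m - 1) / 2) * a * Y η = 0)
    (hbounds : ∀ η ∈ Ico (0:ℝ) 1,
      M₅ * (1 - η) * σ η ≤ Y η ∧ Y η ≤ M₆ * (1 - η) * σ η)
    (hderiv : ∀ η ∈ Ico (0:ℝ) 1,
      ν * deriv Y η =
        -(m * a * (1 - η ^ 2) / Y η)
          - ((m + 1) / 2) * a * ∫ s in (0:ℝ)..η, s / Y s) :
    ∃ M₇ M₈ : ℝ, 0 < M₈ ∧ M₈ ≤ M₇ ∧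
      ∀ η ∈ Ioo (0:ℝ) 1, -M₇ * σ η ≤ deriv Y η ∧ deriv Y η ≤ -M₈ * σ η := by
  have hlogμ : 0 < -Real.log μ := by
    have := Real.log_neg hμ0 hμ1; linarith
  set σ₀ : ℝ := Real.sqrt (-Real.log μ) with hσ₀def
  clear_value σ₀
  have hσ₀pos : 0 < σ₀ := by rw [hσ₀def]; exact Real.sqrt_pos.mpr hlogμ
  have hσ00 : σ 0 = σ₀ := by rw [hσ 0, hσ₀def]; norm_num
  have hσpos : ∀ s ∈ Ico (0:ℝ) 1, 0 < σ s := by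
    intro s hs
    obtain ⟨hs0, hs1⟩ := hs
    have h1s : 0 < 1 - s := by linarith
    have hμs : (0:ℝ) < μ * (1 - s) := by positivity
    have hlt : μ * (1 - s) < 1 := by nlinarith [mul_nonneg hμ0.le hs0]
    have := Real.log_neg hμs hlt
    rw [hσ s]
    exact Real.sqrt_pos.mpr (by linarith)
  have hσ_ge : ∀ s ∈ Ico (0:ℝ) 1, σ₀ ≤ σ s := by
    intro s hs
    obtain ⟨hs0, hs1⟩ := hs
    have h1s : 0 < 1 - s := by linarith
    rw [hσ s, hσ₀def]
    apply Real.sqrt_le_sqrt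
    rw [Real.log_mul (ne_of_gt hμ0) (ne_of_gt h1s)]
    have : Real.log (1 - s) ≤ 0 := Real.log_nonpos (by linarith) (by linarith)
    linarith
  -- constants
  set A : ℝ := m * a / M₆ with hAdef
  set Bc : ℝ := (m + 1) * a / (2 * M₆) with hBdef
  set C : ℝ := 2 * σ₀ + 1 / σ₀ with hCdef
  have hApos : 0 < A := by rw [hAdef]; positivity
  have hBpos : 0 < Bc := by rw [hBdef]; positivity
  have hCpos : 0 < C := by rw [hCdef]; positivity
  set K₇ : ℝ := (2 * m * a / (M₅ * σ₀ ^ 2) + (m + 1) * a / M₅) / ν with hK₇def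
  set K₈ : ℝ := min Bc (A / C ^ 2) / ν with hK₈def
  clear_value A Bc C K₇ K₈
  have hK₈pos : 0 < K₈ := by
    rw [hK₈def]
    apply div_pos _ hν
    exact lt_min hBpos (div_pos hApos (pow_pos hCpos 2))
  have hνK₈ : ν * K₈ = min Bc (A / C ^ 2) := by
    rw [hK₈def]; field_simp
  have hνK₇ : ν * K₇ = 2 * m * a / (M₅ * σ₀ ^ 2) + (m + 1) * a / M₅ := by
    rw [hK₇def]; field_simp
  refine ⟨max K₇ K₈, K₈, hK₈pos, le_max_right _ _, ?_⟩
  intro η hη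
  obtain ⟨hη0, hη1⟩ := hη
  have h1η : 0 < 1 - η := by linarith
  have hηIco : η ∈ Ico (0:ℝ) 1 := ⟨le_of_lt hη0, hη1⟩
  have hIcc : Icc (0:ℝ) η ⊆ Ico (0:ℝ) 1 := fun x hx => ⟨hx.1, lt_of_le_of_lt hx.2 hη1⟩
  have hσηpos : 0 < σ η := hσpos η hηIco
  have hσηge : σ₀ ≤ σ η := hσ_ge η hηIco
  -- continuity facts on Icc 0 η
  have hσcont : ContinuousOn σ (Icc 0 η) := by
    intro x hx
    have h := crocco_aux_contOn μ hμ0 x (hIcc hx)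
    have heq : σ = fun t => Real.sqrt (-Real.log (μ * (1 - t))) := funext hσ
    rw [heq]
    exact h.continuousWithinAt
  have hYcont : ContinuousOn Y (Icc 0 η) := (hC2.continuousOn).mono hIcc
  have hden : ∀ x ∈ Icc (0:ℝ) η, 0 < (1 - x) * σ x := by
    intro x hx
    have h1x : 0 < 1 - x := by linarith [(hIcc hx).2]
    exact mul_pos h1x (hσpos x (hIcc hx))
  -- integrands
  set w : ℝ → ℝ := fun s => s / ((1 - s) * σ s) with hwdef
  set w1 : ℝ → ℝ := fun s => 1 / ((1 - s) * σ s) with hw1def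
  clear_value w w1
  have huIcc : uIcc (0:ℝ) η = Icc 0 η := uIcc_of_le (le_of_lt hη0)
  have hInt_w : IntervalIntegrable w MeasureTheory.volume 0 η := by
    rw [hwdef]
    apply ContinuousOn.intervalIntegrable
    rw [huIcc]
    exact ContinuousOn.div continuousOn_id
      ((continuousOn_const.sub continuousOn_id).mul hσcont)
      (fun x hx => ne_of_gt (hden x hx))
  have hInt_w1 : IntervalIntegrable w1 MeasureTheory.volume 0 η := by
    rw [hw1def]
    apply ContinuousOn.intervalIntegrable
    rw [huIcc]
    exact ContinuousOn.div continuousOn_const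
      ((continuousOn_const.sub continuousOn_id).mul hσcont)
      (fun x hx => ne_of_gt (hden x hx))
  have hInt_Y : IntervalIntegrable (fun s => s / Y s) MeasureTheory.volume 0 η := by
    apply ContinuousOn.intervalIntegrable
    rw [huIcc]
    exact ContinuousOn.div continuousOn_id hYcont
      (fun x hx => ne_of_gt (hpos x (hIcc hx)))
  -- FTC : ∫ w1 = 2σ(η) - 2σ₀
  have hFTC : ∫ s in (0:ℝ)..η, w1 s = 2 * σ η - 2 * σ₀ := by
    have h := intervalIntegral.integral_eq_sub_of_hasDerivAt
      (f := fun t => 2 * Real.sqrt (-Real.log (μ * (1 - t)))) (f' := w1)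
      (a := (0:ℝ)) (b := η) ?_ hInt_w1
    · rw [h, ← hσ00]
      have e1 : Real.sqrt (-Real.log (μ * (1 - η))) = σ η := (hσ η).symm
      have e2 : Real.sqrt (-Real.log (μ * (1 - 0))) = σ 0 := (hσ 0).symm
      rw [e1, e2]
    · intro x hx
      rw [huIcc] at hx
      have h2 := crocco_aux_hasDeriv μ hμ0 hμ1 x (hIcc hx)
      simp only [hw1def, hσ]
      exact h2
  -- lower bound for ∫ w
  have hw_low : 2 * σ η - 2 * σ₀ - 1 / σ₀ ≤ ∫ s in (0:ℝ)..η, w s := by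
    have hmono : ∫ s in (0:ℝ)..η, (w1 s - 1 / σ₀) ≤ ∫ s in (0:ℝ)..η, w s := by
      apply intervalIntegral.integral_mono_on (le_of_lt hη0)
        (hInt_w1.sub intervalIntegrable_const) hInt_w
      intro x hx
      have hdx := hden x hx
      have hσx := hσpos x (hIcc hx)
      have hσxge := hσ_ge x (hIcc hx)
      have h1x : 0 < 1 - x := by linarith [(hIcc hx).2]
      have hkey : w1 x - w x = 1 / σ x := by
        simp only [hwdef, hw1def]
        field_simp
      have h2 : 1 / σ x ≤ 1 / σ₀ :=
        div_le_div_of_nonneg_left zero_le_one hσ₀pos hσxge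
      linarith
    have hsub : ∫ s in (0:ℝ)..η, (w1 s - 1 / σ₀) =
        (∫ s in (0:ℝ)..η, w1 s) - η * (1 / σ₀) := by
      rw [intervalIntegral.integral_sub hInt_w1 intervalIntegrable_const,
        intervalIntegral.integral_const, smul_eq_mul]
      ring
    rw [hsub, hFTC] at hmono
    have hη1' : η * (1 / σ₀) ≤ 1 / σ₀ := by
      have h1 : (0:ℝ) ≤ 1 / σ₀ := by positivity
      linarith [mul_nonneg (by linarith : (0:ℝ) ≤ 1 - η) h1]
    linarith
  -- upper bound for ∫ w
  have hw_up : ∫ s in (0:ℝ)..η, w s ≤ 2 * σ η - 2 * σ₀ := by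
    rw [← hFTC]
    apply intervalIntegral.integral_mono_on (le_of_lt hη0) hInt_w hInt_w1
    intro x hx
    have hdx := hden x hx
    have hx1 : x ≤ 1 := le_trans hx.2 (le_of_lt hη1)
    simp only [hwdef, hw1def]
    exact (div_le_div_iff_of_pos_right hdx).mpr hx1
  -- pointwise comparison with s / Y s
  have hcmp : ∀ x ∈ Icc (0:ℝ) η,
      w x / M₆ ≤ x / Y x ∧ x / Y x ≤ w x / M₅ := by
    intro x hx
    have hxI := hIcc hx
    have hYx := hpos x hxI
    have hb := hbounds x hxI
    have hdx := hden x hx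
    have hx0 : 0 ≤ x := hx.1
    constructor
    · simp only [hwdef]
      rw [div_div]
      apply div_le_div_of_nonneg_left hx0 hYx
      calc Y x ≤ M₆ * (1 - x) * σ x := hb.2
        _ = (1 - x) * σ x * M₆ := by ring
    · simp only [hwdef]
      rw [div_div]
      have hc : 0 < (1 - x) * σ x * M₅ := mul_pos hdx hM₅
      apply div_le_div_of_nonneg_left hx0 hc
      calc (1 - x) * σ x * M₅ = M₅ * (1 - x) * σ x := by ring
        _ ≤ Y x := hb.1
  -- bounds on I := ∫ s/Y
  set I : ℝ := ∫ s in (0:ℝ)..η, s / Y s with hIdef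
  clear_value I
  have hI_nonneg : 0 ≤ I := by
    rw [hIdef]
    apply intervalIntegral.integral_nonneg (le_of_lt hη0)
    intro x hx
    exact div_nonneg hx.1 (le_of_lt (hpos x (hIcc hx)))
  have hI_up : I ≤ (2 * σ η - 2 * σ₀) / M₅ := by
    have h1 : I ≤ ∫ s in (0:ℝ)..η, w s / M₅ := by
      rw [hIdef]
      apply intervalIntegral.integral_mono_on (le_of_lt hη0) hInt_Y
        (hInt_w.div_const M₅)
      intro x hx; exact (hcmp x hx).2
    have h2 : ∫ s in (0:ℝ)..η, w s / M₅ = (∫ s in (0:ℝ)..η, w s) / M₅ :=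
      intervalIntegral.integral_div M₅ w
    rw [h2] at h1
    exact h1.trans ((div_le_div_iff_of_pos_right hM₅).mpr hw_up)
  have hI_low : (2 * σ η - 2 * σ₀ - 1 / σ₀) / M₆ ≤ I := by
    have h1 : ∫ s in (0:ℝ)..η, w s / M₆ ≤ I := by
      rw [hIdef]
      apply intervalIntegral.integral_mono_on (le_of_lt hη0)
        (hInt_w.div_const M₆) hInt_Y
      intro x hx; exact (hcmp x hx).1
    have h2 : ∫ s in (0:ℝ)..η, w s / M₆ = (∫ s in (0:ℝ)..η, w s) / M₆ :=
      intervalIntegral.integral_div M₆ w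
    rw [h2] at h1
    exact ((div_le_div_iff_of_pos_right hM₆).mpr hw_low).trans h1
  -- bounds on T1 := m a (1-η²)/Y η
  have hb := hbounds η hηIco
  have hYη := hpos η hηIco
  have hT1_low : A / σ η ≤ m * a * (1 - η ^ 2) / Y η := by
    rw [hAdef, div_div, div_le_div_iff₀ (mul_pos hM₆ hσηpos) hYη]
    have h5 : m * a * Y η ≤ m * a * (M₆ * (1 - η) * σ η) :=
      mul_le_mul_of_nonneg_left hb.2 (mul_pos hm ha).le
    have h7 : 0 ≤ m * a * M₆ * σ η * ((1 - η) * η) :=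
      mul_nonneg (mul_nonneg (mul_nonneg (mul_nonneg hm.le ha.le) hM₆.le) hσηpos.le)
        (mul_nonneg h1η.le hη0.le)
    linarith [h5, h7]
  have hT1_up : m * a * (1 - η ^ 2) / Y η ≤ 2 * m * a / (M₅ * σ₀ ^ 2) * σ η := by
    have hc : 0 < M₅ * (1 - η) * σ η := mul_pos (mul_pos hM₅ h1η) hσηpos
    have h1η2 : (0:ℝ) ≤ 1 - η ^ 2 := by
      have h := mul_nonneg h1η.le (by linarith : (0:ℝ) ≤ 1 + η)
      linarith [h]
    have hnum : (0:ℝ) ≤ m * a * (1 - η ^ 2) :=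
      mul_nonneg (mul_nonneg hm.le ha.le) h1η2
    have h1 : m * a * (1 - η ^ 2) / Y η ≤ m * a * (1 - η ^ 2) / (M₅ * (1 - η) * σ η) :=
      div_le_div_of_nonneg_left hnum hc hb.1
    apply h1.trans
    rw [div_le_iff₀ hc, div_mul_eq_mul_div, div_mul_eq_mul_div,
      le_div_iff₀ (by positivity : (0:ℝ) < M₅ * σ₀ ^ 2)]
    have hσsq : σ₀ ^ 2 ≤ σ η ^ 2 := pow_le_pow_left₀ hσ₀pos.le hσηge 2
    have hkey : (1 + η) * σ₀ ^ 2 ≤ 2 * σ η ^ 2 := by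
      have h8 : 0 ≤ (1 - η) * σ₀ ^ 2 := mul_nonneg h1η.le (sq_nonneg σ₀)
      linarith [hσsq, h8]
    have h4 : (0:ℝ) ≤ m * a * M₅ * (1 - η) := mul_nonneg (by positivity) h1η.le
    linarith [mul_le_mul_of_nonneg_left hkey h4]
  -- the derivative formula
  have hD := hderiv η hηIco
  rw [← hIdef] at hD
  constructor
  · -- lower bound : -(max K₇ K₈) σ η ≤ Y'
    have key : -(ν * K₇) * σ η ≤ ν * deriv Y η := by
      rw [hD, hνK₇]
      have hIb : ((m + 1) / 2) * a * I ≤ (m + 1) * a / M₅ * σ η := by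
        have h2σ : (2 * σ η - 2 * σ₀) / M₅ ≤ 2 * σ η / M₅ :=
          (div_le_div_iff_of_pos_right hM₅).mpr (by linarith)
        have hI2 : I ≤ 2 * σ η / M₅ := hI_up.trans h2σ
        calc ((m + 1) / 2) * a * I ≤ ((m + 1) / 2) * a * (2 * σ η / M₅) := by
              apply mul_le_mul_of_nonneg_left hI2 (by positivity)
          _ = (m + 1) * a / M₅ * σ η := by field_simp
      linarith [hT1_up, hIb]
    have h1 : -(max K₇ K₈) * σ η ≤ -K₇ * σ η := by
      have h9 : 0 ≤ (max K₇ K₈ - K₇) * σ η :=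
        mul_nonneg (sub_nonneg.mpr (le_max_left K₇ K₈)) hσηpos.le
      linarith [h9]
    refine h1.trans ?_
    have h2 : ν * (-K₇ * σ η) ≤ ν * deriv Y η := by
      calc ν * (-K₇ * σ η) = -(ν * K₇) * σ η := by ring
        _ ≤ ν * deriv Y η := key
    exact (mul_le_mul_iff_right₀ hν).mp h2
  · -- upper bound : Y' ≤ -K₈ σ η
    have key : ν * deriv Y η ≤ -(ν * K₈) * σ η := by
      rw [hD, hνK₈]
      rcases le_or_gt (σ η) C with hcase | hcase
      · -- σ η ≤ C : use first term
        have h1 : min Bc (A / C ^ 2) * σ η ≤ (A / C ^ 2) * σ η :=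
          mul_le_mul_of_nonneg_right (min_le_right _ _) (le_of_lt hσηpos)
        have h2 : (A / C ^ 2) * σ η ≤ A / σ η := by
          rw [div_mul_eq_mul_div, div_le_div_iff₀ (pow_pos hCpos 2) hσηpos]
          linarith [mul_le_mul_of_nonneg_left
            (mul_le_mul hcase hcase hσηpos.le hCpos.le) hApos.le]
        have h3 : 0 ≤ ((m + 1) / 2) * a * I :=
          mul_nonneg (by positivity) hI_nonneg
        linarith [hT1_low, h1, h2, h3]
      · -- C < σ η : use integral term
        have hIσ : σ η / M₆ ≤ I := by
          refine le_trans ?_ hI_low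
          apply (div_le_div_iff_of_pos_right hM₆).mpr
          rw [hCdef] at hcase
          linarith
        have h1 : min Bc (A / C ^ 2) * σ η ≤ Bc * σ η :=
          mul_le_mul_of_nonneg_right (min_le_left _ _) (le_of_lt hσηpos)
        have h2 : Bc * σ η ≤ ((m + 1) / 2) * a * I := by
          calc Bc * σ η = ((m + 1) / 2) * a * (σ η / M₆) := by
                rw [hBdef]; field_simp
            _ ≤ ((m + 1) / 2) * a * I := by
                apply mul_le_mul_of_nonneg_left hIσ (by positivity)
        have h3 : 0 < m * a * (1 - η ^ 2) / Y η :=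
          lt_of_lt_of_le (div_pos hApos hσηpos) hT1_low
        linarith [h1, h2, h3]
    have h2 : ν * deriv Y η ≤ ν * (-K₈ * σ η) := by
      calc ν * deriv Y η ≤ -(ν * K₈) * σ η := key
        _ = ν * (-K₈ * σ η) := by ring
    exact (mul_le_mul_iff_right₀ hν).mp h2
end

section
/- Let β > 0 and let f₁, f₂ be two solutions of f''' + f f'' + β(1-(f')²) = 0 on [0,∞) with the same data f(0) = f₀, f'(0) = f₁ ∈ [0,1), f' → 1 at infinity, 0 < f' < 1 on (0,∞) and f'' > 0 on [0,∞). Then f₁ = f₂. -/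
open Set Filter

namespace FalknerSkanAux

/-- Bundled hypotheses for one solution of the Falkner–Skan problem. -/
structure FS (β f1 : ℝ) (f : ℝ → ℝ) : Prop where
  smooth : ContDiff ℝ 3 f
  ode : ∀ z ≥ (0:ℝ), deriv^[3] f z + f z * deriv^[2] f z + β * (1 - (deriv f z) ^ 2) = 0
  d0 : deriv f 0 = f1
  lim : Tendsto (deriv f) atTop (nhds 1)
  rng : ∀ z > (0:ℝ), 0 < deriv f z ∧ deriv f z < 1
  conv : ∀ z ≥ (0:ℝ), 0 < deriv^[2] f z

variable {β f1 : ℝ} {f : ℝ → ℝ}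

theorem FS.cd2 (hF : FS β f1 f) : ContDiff ℝ 2 (deriv f) :=
  ((contDiff_succ_iff_deriv (n := 2)).1 (by exact_mod_cast hF.smooth)).2.2

theorem FS.cd1 (hF : FS β f1 f) : ContDiff ℝ 1 (deriv^[2] f) := by
  have := (contDiff_succ_iff_deriv (n := 1)).1 hF.cd2
  simpa [Function.iterate_succ, Function.iterate_one] using this.2.2

theorem FS.c2 (hF : FS β f1 f) : Continuous (deriv^[2] f) := hF.cd1.continuous

theorem FS.c1 (hF : FS β f1 f) : Continuous (deriv f) := hF.cd2.continuous

theorem FS.c3 (hF : FS β f1 f) : Continuous (deriv^[3] f) := by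
  have := (contDiff_one_iff_deriv).1 hF.cd1
  simpa [Function.iterate_succ] using this.2

theorem FS.hd1 (hF : FS β f1 f) (z : ℝ) : HasDerivAt f (deriv f z) z :=
  (hF.smooth.differentiable (by norm_num) z).hasDerivAt

theorem FS.hd2 (hF : FS β f1 f) (z : ℝ) : HasDerivAt (deriv f) (deriv^[2] f z) z :=
  (hF.cd2.differentiable (by norm_num) z).hasDerivAt

theorem FS.hd3 (hF : FS β f1 f) (z : ℝ) : HasDerivAt (deriv^[2] f) (deriv^[3] f z) z :=
  (hF.cd1.differentiable (by norm_num) z).hasDerivAt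

theorem FS.mono (hF : FS β f1 f) : StrictMonoOn (deriv f) (Ici 0) := by
  apply strictMonoOn_of_deriv_pos (convex_Ici 0) hF.c1.continuousOn
  intro x hx
  rw [interior_Ici] at hx
  exact hF.conv x hx.le

theorem FS.lb (hF : FS β f1 f) : ∀ z ≥ (0:ℝ), f1 ≤ deriv f z := by
  intro z hz
  rcases eq_or_lt_of_le hz with h | h
  · rw [← h, hF.d0]
  · rw [← hF.d0]
    exact (hF.mono self_mem_Ici hz h).le

theorem FS.lb0 (h10 : 0 ≤ f1) (hF : FS β f1 f) : ∀ z ≥ (0:ℝ), 0 ≤ deriv f z :=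
  fun z hz => le_trans h10 (hF.lb z hz)

theorem FS.ub (h11 : f1 < 1) (hF : FS β f1 f) : ∀ z ≥ (0:ℝ), deriv f z < 1 := by
  intro z hz
  rcases eq_or_lt_of_le hz with h | h
  · rw [← h, hF.d0]; exact h11
  · exact (hF.rng z h).2

theorem FS.surj (h11 : f1 < 1) (hF : FS β f1 f) :
    ∀ u, f1 ≤ u → u < 1 → ∃ z, 0 ≤ z ∧ deriv f z = u := by
  intro u h1 h2
  rcases eq_or_lt_of_le h1 with he | hlt
  · exact ⟨0, le_rfl, by rw [hF.d0, he]⟩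
  · have hev : ∀ᶠ z in atTop, u < deriv f z := hF.lim.eventually (eventually_gt_nhds h2)
    obtain ⟨z2', hz2'⟩ := eventually_atTop.1 hev
    set z2 := max z2' 0 with hz2def
    have hz20 : (0:ℝ) ≤ z2 := le_max_right _ _
    have hz2u : u < deriv f z2 := hz2' z2 (le_max_left _ _)
    have := intermediate_value_Icc hz20 (hF.c1.continuousOn (s := Icc 0 z2))
    have hmem : u ∈ Icc (deriv f 0) (deriv f z2) := ⟨by rw [hF.d0]; exact h1, hz2u.le⟩
    obtain ⟨z, hz, hfz⟩ := this hmem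
    exact ⟨z, hz.1, hfz⟩

/-- `∀ ε > 0`, `deriv^[2] f` is eventually `< ε`. -/
theorem FS.small (hβ : 0 < β) (h10 : 0 ≤ f1) (h11 : f1 < 1) (hF : FS β f1 f) :
    ∀ ε > (0:ℝ), ∃ Z, 0 ≤ Z ∧ ∀ z ≥ Z, deriv^[2] f z < ε := by
  intro ε hε
  -- Step 1: eventually deriv f ≥ 1/2
  have h1 : ∀ᶠ z in atTop, (1:ℝ)/2 < deriv f z :=
    hF.lim.eventually (eventually_gt_nhds (by norm_num))
  obtain ⟨Z1', hZ1'⟩ := eventually_atTop.1 h1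
  set Z1 := max Z1' 0 with hZ1def
  have hZ10 : (0:ℝ) ≤ Z1 := le_max_right _ _
  have grow : ∀ z ≥ Z1, (1/2) * (z - Z1) ≤ f z - f Z1 := by
    intro z hz
    apply (convex_Ici Z1).mul_sub_le_image_sub_of_le_deriv
      (hF.smooth.continuous.continuousOn)
      ((hF.smooth.differentiable (by norm_num)).differentiableOn)
      (fun x hx => by
        rw [interior_Ici] at hx
        exact (hZ1' x (le_trans (le_max_left _ _) hx.le)).le)
      Z1 self_mem_Ici z hz hz
  set Z0 := Z1 + 2 * |f Z1| + 1 with hZ0def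
  have hZ01 : Z1 ≤ Z0 := by nlinarith [abs_nonneg (f Z1)]
  have hZ00 : (0:ℝ) ≤ Z0 := le_trans hZ10 hZ01
  have fpos : ∀ z ≥ Z0, 0 < f z := by
    intro z hz
    have h := grow z (le_trans hZ01 hz)
    have := neg_abs_le (f Z1)
    nlinarith [abs_nonneg (f Z1)]
  -- Step 2: f'' is antitone on [Z0, ∞)
  have anti : AntitoneOn (deriv^[2] f) (Ici Z0) := by
    apply antitoneOn_of_deriv_nonpos (convex_Ici Z0) hF.c2.continuousOn
      (fun x _ => (hF.hd3 x).differentiableAt.differentiableWithinAt)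
    intro x hx
    rw [interior_Ici] at hx
    have hx0 : (0:ℝ) ≤ x := le_trans hZ00 hx.le
    rw [(hF.hd3 x).deriv]
    have ho := hF.ode x hx0
    have h2 := hF.conv x hx0
    have hu1 : deriv f x < 1 := hF.ub h11 x hx0
    have hu0 : 0 ≤ deriv f x := hF.lb0 h10 x hx0
    have hp1 : 0 < f x * deriv^[2] f x := mul_pos (fpos x hx.le) h2
    have hp2 : 0 ≤ β * (1 - deriv f x ^ 2) :=
      mul_nonneg hβ.le (by nlinarith)
    linarith
  -- Step 3: some point with small f''
  have hz1 : ∃ z1, Z0 ≤ z1 ∧ deriv^[2] f z1 < ε := by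
    by_contra hcon
    push_neg at hcon
    have grow2 : ε * ((Z0 + 3/ε) - Z0) ≤ deriv f (Z0 + 3/ε) - deriv f Z0 := by
      apply (convex_Ici Z0).mul_sub_le_image_sub_of_le_deriv
        hF.c1.continuousOn
        (fun x _ => (hF.hd2 x).differentiableAt.differentiableWithinAt)
        (fun x hx => by
          rw [interior_Ici] at hx
          rw [(hF.hd2 x).deriv]
          exact hcon x hx.le)
        Z0 self_mem_Ici (Z0 + 3/ε) (mem_Ici.2 (le_add_of_nonneg_right (by positivity)))
        (le_add_of_nonneg_right (by positivity))
    have he3 : ε * ((Z0 + 3/ε) - Z0) = 3 := by field_simp; ring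
    have hub := hF.ub h11 (Z0 + 3/ε) (by positivity)
    have hlb := hF.lb0 h10 Z0 hZ00
    linarith
  obtain ⟨z1, hz1Z, hz1ε⟩ := hz1
  refine ⟨z1, le_trans hZ00 hz1Z, fun z hz => lt_of_le_of_lt ?_ hz1ε⟩
  exact anti hz1Z (le_trans hz1Z hz) hz

open Classical in
/-- The inverse function of `deriv f` on `[0,∞)`. -/
noncomputable def zeta (f : ℝ → ℝ) (u : ℝ) : ℝ :=
  if h : ∃ z, 0 ≤ z ∧ deriv f z = u then h.choose else 0

theorem FS.zeta_spec (h11 : f1 < 1) (hF : FS β f1 f) {u : ℝ} (h1 : f1 ≤ u) (h2 : u < 1) :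
    0 ≤ zeta f u ∧ deriv f (zeta f u) = u := by
  have h := hF.surj h11 u h1 h2
  rw [zeta, dif_pos h]
  exact h.choose_spec

theorem FS.zeta_f1 (h11 : f1 < 1) (hF : FS β f1 f) : zeta f f1 = 0 := by
  obtain ⟨h1, h2⟩ := hF.zeta_spec h11 le_rfl h11
  exact hF.mono.injOn h1 self_mem_Ici (by rw [h2, hF.d0])

theorem FS.zeta_contAt (h11 : f1 < 1) (hF : FS β f1 f) {u : ℝ}
    (hu : f1 < u) (hu1 : u < 1) : ContinuousAt (zeta f) u := by
  obtain ⟨hz0, hzu⟩ := hF.zeta_spec h11 hu.le hu1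
  have hz0pos : 0 < zeta f u := by
    rcases eq_or_lt_of_le hz0 with h | h
    · exfalso; rw [← h, hF.d0] at hzu; exact absurd hzu.symm (ne_of_gt hu)
    · exact h
  rw [ContinuousAt, Metric.tendsto_nhds]
  intro ε hε
  set z0 := zeta f u with hz0def
  set c := min (ε/2) (z0/2) with hcdef
  have hcpos : 0 < c := lt_min (by positivity) (by positivity)
  have hcε : c ≤ ε/2 := min_le_left _ _
  have hcz : c ≤ z0/2 := min_le_right _ _
  have hzc0 : (0:ℝ) ≤ z0 - c := by linarith
  have hzc0' : (0:ℝ) ≤ z0 + c := by linarith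
  have ha : deriv f (z0 - c) < u := by
    rw [← hzu]; exact hF.mono hzc0 hz0 (by linarith)
  have hb : u < deriv f (z0 + c) := by
    rw [← hzu]; exact hF.mono hz0 hzc0' (by linarith)
  have hbu : deriv f (z0 + c) < 1 := hF.ub h11 _ hzc0'
  have haf1 : f1 ≤ deriv f (z0 - c) := hF.lb _ hzc0
  filter_upwards [Ioo_mem_nhds ha hb] with u' hu'
  obtain ⟨hz0'', hzu''⟩ := hF.zeta_spec h11 (le_trans haf1 hu'.1.le) (lt_trans hu'.2 hbu)
  have l1 : zeta f u' < z0 + c := by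
    refine (hF.mono.lt_iff_lt hz0'' hzc0').1 ?_
    rw [hzu'']; exact hu'.2
  have l2 : z0 - c < zeta f u' := by
    refine (hF.mono.lt_iff_lt hzc0 hz0'').1 ?_
    rw [hzu'']; exact hu'.1
  rw [Real.dist_eq, abs_lt]
  constructor <;> [linarith; linarith]

theorem FS.zeta_cont0 (h11 : f1 < 1) (hF : FS β f1 f) :
    ContinuousWithinAt (zeta f) (Ico f1 1) f1 := by
  have h0 : zeta f f1 = 0 := hF.zeta_f1 h11
  rw [ContinuousWithinAt, Metric.tendsto_nhds]
  intro ε hε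
  have hb : f1 < deriv f (ε/2) := by
    rw [← hF.d0]; exact hF.mono self_mem_Ici (mem_Ici.2 (by positivity)) (by positivity)
  have hmem : Iio (deriv f (ε/2)) ∈ nhdsWithin f1 (Ico f1 1) :=
    nhdsWithin_le_nhds (Iio_mem_nhds hb)
  filter_upwards [hmem, self_mem_nhdsWithin] with u' h1 h2
  obtain ⟨hs1, hs2⟩ := hF.zeta_spec h11 h2.1 h2.2
  have : zeta f u' < ε/2 := by
    refine (hF.mono.lt_iff_lt hs1 (mem_Ici.2 (by positivity : (0:ℝ) ≤ ε/2))).1 ?_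
    rw [hs2]; exact h1
  rw [h0, Real.dist_eq, sub_zero, abs_of_nonneg hs1]
  linarith

theorem FS.zetaOn (h11 : f1 < 1) (hF : FS β f1 f) :
    ContinuousOn (zeta f) (Ico f1 1) := by
  intro u hu
  rcases eq_or_lt_of_le hu.1 with h | h
  · rw [← h]; exact hF.zeta_cont0 h11
  · exact (hF.zeta_contAt h11 h hu.2).continuousWithinAt

theorem FS.zeta_deriv (h11 : f1 < 1) (hF : FS β f1 f) {u : ℝ}
    (hu : f1 < u) (hu1 : u < 1) :
    HasDerivAt (zeta f) (deriv^[2] f (zeta f u))⁻¹ u := by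
  obtain ⟨hz0, _⟩ := hF.zeta_spec h11 hu.le hu1
  have hne : deriv^[2] f (zeta f u) ≠ 0 := (hF.conv _ hz0).ne'
  have hev : ∀ᶠ y in nhds u, deriv f (zeta f y) = y := by
    filter_upwards [Ioo_mem_nhds hu hu1] with y hy
    exact (hF.zeta_spec h11 hy.1.le hy.2).2
  exact (hF.hd2 (zeta f u)).of_local_left_inverse (hF.zeta_contAt h11 hu hu1) hne hev

/-- The key comparison lemma: two solutions with the same `f(0)` cannot have
different second derivatives at `0`. -/
theorem key {g : ℝ → ℝ} (hβ : 0 < β) (h10 : 0 ≤ f1) (h11 : f1 < 1)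
    (hF : FS β f1 f) (hG : FS β f1 g) (h00 : f 0 = g 0) :
    ¬ deriv^[2] g 0 < deriv^[2] f 0 := by
  intro hlt
  set δ := deriv^[2] f 0 - deriv^[2] g 0 with hδdef
  have hδ : 0 < δ := sub_pos.2 hlt
  set W : ℝ → ℝ := fun u => deriv^[2] f (zeta f u) - deriv^[2] g (zeta g u) with hWdef
  set Δ : ℝ → ℝ := fun u => f (zeta f u) - g (zeta g u) with hΔdef
  clear_value δ W Δ
  have hWf1 : W f1 = δ := by
    simp only [hWdef, hF.zeta_f1 h11, hG.zeta_f1 h11, hδdef]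
  have hΔf1 : Δ f1 = 0 := by
    simp only [hΔdef, hF.zeta_f1 h11, hG.zeta_f1 h11, h00, sub_self]
  have hWc : ContinuousOn W (Ico f1 1) := by
    rw [hWdef]
    exact (hF.c2.comp_continuousOn (hF.zetaOn h11)).sub
      (hG.c2.comp_continuousOn (hG.zetaOn h11))
  have hΔc : ContinuousOn Δ (Ico f1 1) := by
    rw [hΔdef]
    exact (hF.smooth.continuous.comp_continuousOn (hF.zetaOn h11)).sub
      (hG.smooth.continuous.comp_continuousOn (hG.zetaOn h11))
  have hfspec : ∀ u ∈ Ico f1 1, 0 ≤ zeta f u ∧ deriv f (zeta f u) = u :=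
    fun u hu => hF.zeta_spec h11 hu.1 hu.2
  have hgspec : ∀ u ∈ Ico f1 1, 0 ≤ zeta g u ∧ deriv g (zeta g u) = u :=
    fun u hu => hG.zeta_spec h11 hu.1 hu.2
  have hvf : ∀ u ∈ Ico f1 1, 0 < deriv^[2] f (zeta f u) :=
    fun u hu => hF.conv _ (hfspec u hu).1
  have hvg : ∀ u ∈ Ico f1 1, 0 < deriv^[2] g (zeta g u) :=
    fun u hu => hG.conv _ (hgspec u hu).1
  -- derivative of Δ
  have hΔd : ∀ u ∈ Ioo f1 1, HasDerivAt Δ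
      (u * ((deriv^[2] f (zeta f u))⁻¹ - (deriv^[2] g (zeta g u))⁻¹)) u := by
    intro u hu
    rw [hΔdef]
    have huI : u ∈ Ico f1 1 := ⟨hu.1.le, hu.2⟩
    have h1 : HasDerivAt (fun v => f (zeta f v))
        (deriv f (zeta f u) * (deriv^[2] f (zeta f u))⁻¹) u :=
      (hF.hd1 (zeta f u)).comp u (hF.zeta_deriv h11 hu.1 hu.2)
    have h2 : HasDerivAt (fun v => g (zeta g v))
        (deriv g (zeta g u) * (deriv^[2] g (zeta g u))⁻¹) u :=
      (hG.hd1 (zeta g u)).comp u (hG.zeta_deriv h11 hu.1 hu.2)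
    rw [(hfspec u huI).2] at h1
    rw [(hgspec u huI).2] at h2
    have := h1.sub h2
    convert this using 1
    · rfl
    · rfl
    · rfl
    ring
  -- derivative of W
  have hWd : ∀ u ∈ Ioo f1 1, HasDerivAt W
      (-(Δ u) - β * (1 - u^2) *
        ((deriv^[2] f (zeta f u))⁻¹ - (deriv^[2] g (zeta g u))⁻¹)) u := by
    intro u hu
    rw [hWdef]
    have huI : u ∈ Ico f1 1 := ⟨hu.1.le, hu.2⟩
    have h1 : HasDerivAt (fun v => deriv^[2] f (zeta f v))
        (deriv^[3] f (zeta f u) * (deriv^[2] f (zeta f u))⁻¹) u :=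
      (hF.hd3 (zeta f u)).comp u (hF.zeta_deriv h11 hu.1 hu.2)
    have h2 : HasDerivAt (fun v => deriv^[2] g (zeta g v))
        (deriv^[3] g (zeta g u) * (deriv^[2] g (zeta g u))⁻¹) u :=
      (hG.hd3 (zeta g u)).comp u (hG.zeta_deriv h11 hu.1 hu.2)
    have e1 : deriv^[3] f (zeta f u) * (deriv^[2] f (zeta f u))⁻¹
        = -(f (zeta f u)) - β * (1 - u^2) * (deriv^[2] f (zeta f u))⁻¹ := by
      have ho := hF.ode (zeta f u) (hfspec u huI).1
      rw [(hfspec u huI).2] at ho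
      have hne := (hvf u huI).ne'
      have hv : deriv^[2] f (zeta f u) * (deriv^[2] f (zeta f u))⁻¹ = 1 :=
        mul_inv_cancel₀ hne
      linear_combination (deriv^[2] f (zeta f u))⁻¹ * ho - f (zeta f u) * hv
    have e2 : deriv^[3] g (zeta g u) * (deriv^[2] g (zeta g u))⁻¹
        = -(g (zeta g u)) - β * (1 - u^2) * (deriv^[2] g (zeta g u))⁻¹ := by
      have ho := hG.ode (zeta g u) (hgspec u huI).1
      rw [(hgspec u huI).2] at ho
      have hne := (hvg u huI).ne'
      have hv : deriv^[2] g (zeta g u) * (deriv^[2] g (zeta g u))⁻¹ = 1 :=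
        mul_inv_cancel₀ hne
      linear_combination (deriv^[2] g (zeta g u))⁻¹ * ho - g (zeta g u) * hv
    rw [e1] at h1
    rw [e2] at h2
    have := h1.sub h2
    convert this using 1
    · rfl
    · rfl
    · rfl
    simp only [hΔdef]
    ring
  -- sign facts
  have hinv : ∀ u ∈ Ico f1 1, 0 < W u →
      (deriv^[2] f (zeta f u))⁻¹ - (deriv^[2] g (zeta g u))⁻¹ ≤ 0 := by
    intro u hu hW
    have h1 : deriv^[2] g (zeta g u) ≤ deriv^[2] f (zeta f u) := by
      simp only [hWdef] at hW; linarith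
    have := inv_anti₀ (hvg u hu) h1
    linarith
  -- Claim A: W > 0 on [f1, 1)
  have claimA : ∀ u ∈ Ico f1 1, 0 < W u := by
    by_contra hA
    push_neg at hA
    obtain ⟨u₁, hu₁I, hu₁W⟩ := hA
    set bad := {u | u ∈ Ico f1 1 ∧ W u ≤ 0} with hbaddef
    have hne : bad.Nonempty := ⟨u₁, hu₁I, hu₁W⟩
    have hbdd : BddBelow bad := ⟨f1, fun x hx => hx.1.1⟩
    set u' := sInf bad with hu'def
    have hu'lb : f1 ≤ u' := le_csInf hne (fun x hx => hx.1.1)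
    have hu'ub : u' < 1 := lt_of_le_of_lt (csInf_le hbdd ⟨hu₁I, hu₁W⟩) hu₁I.2
    have hu'I : u' ∈ Ico f1 1 := ⟨hu'lb, hu'ub⟩
    have hWu' : W u' ≤ 0 := by
      have hcl : u' ∈ closure bad := csInf_mem_closure hne hbdd
      have hc : ContinuousWithinAt W bad u' := (hWc u' hu'I).mono (fun x hx => hx.1)
      exact hc.closure_le hcl continuousWithinAt_const (fun y hy => hy.2)
    have hf1u' : f1 < u' := by
      rcases eq_or_lt_of_le hu'lb with h | h
      · exfalso; rw [← h, hWf1] at hWu'; linarith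
      · exact h
    have hpos : ∀ u, f1 ≤ u → u < u' → 0 < W u := by
      intro u h1 h2
      by_contra hnp
      push_neg at hnp
      have hmem : u ∈ bad := ⟨⟨h1, lt_trans h2 hu'ub⟩, hnp⟩
      have := csInf_le hbdd hmem
      linarith
    have hsub : Icc f1 u' ⊆ Ico f1 1 := fun x hx => ⟨hx.1, lt_of_le_of_lt hx.2 hu'ub⟩
    have hΔanti : AntitoneOn Δ (Icc f1 u') := by
      apply antitoneOn_of_deriv_nonpos (convex_Icc _ _) (hΔc.mono hsub)
      · intro x hx
        rw [interior_Icc] at hx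
        exact (hΔd x ⟨hx.1, lt_trans hx.2 hu'ub⟩).differentiableAt.differentiableWithinAt
      · intro x hx
        rw [interior_Icc] at hx
        have hxI : x ∈ Ioo f1 1 := ⟨hx.1, lt_trans hx.2 hu'ub⟩
        have hxIco : x ∈ Ico f1 1 := ⟨hx.1.le, hxI.2⟩
        rw [(hΔd x hxI).deriv]
        have hWx : 0 < W x := hpos x hx.1.le hx.2
        have hx0 : (0:ℝ) ≤ x := le_trans h10 hx.1.le
        have := hinv x hxIco hWx
        nlinarith
    have hΔle : ∀ u ∈ Icc f1 u', Δ u ≤ 0 := by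
      intro u hu
      have := hΔanti (left_mem_Icc.2 hf1u'.le) hu hu.1
      rw [hΔf1] at this
      exact this
    have hWmono : MonotoneOn W (Icc f1 u') := by
      apply monotoneOn_of_deriv_nonneg (convex_Icc _ _) (hWc.mono hsub)
      · intro x hx
        rw [interior_Icc] at hx
        exact (hWd x ⟨hx.1, lt_trans hx.2 hu'ub⟩).differentiableAt.differentiableWithinAt
      · intro x hx
        rw [interior_Icc] at hx
        have hxI : x ∈ Ioo f1 1 := ⟨hx.1, lt_trans hx.2 hu'ub⟩
        have hxIco : x ∈ Ico f1 1 := ⟨hx.1.le, hxI.2⟩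
        rw [(hWd x hxI).deriv]
        have hWx : 0 < W x := hpos x hx.1.le hx.2
        have hΔx : Δ x ≤ 0 := hΔle x ⟨hx.1.le, hx.2.le⟩
        have hx0 : (0:ℝ) ≤ x := le_trans h10 hx.1.le
        have hx1 : x < 1 := hxI.2
        have h1u : (0:ℝ) ≤ 1 - x^2 := by nlinarith
        have hiv := hinv x hxIco hWx
        have hprod : β * (1 - x^2) *
            ((deriv^[2] f (zeta f x))⁻¹ - (deriv^[2] g (zeta g x))⁻¹) ≤ 0 :=
          mul_nonpos_of_nonneg_of_nonpos (mul_nonneg hβ.le h1u) hiv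
        nlinarith [hΔx, hprod]
    have hge : δ ≤ W u' := by
      have := hWmono (left_mem_Icc.2 hf1u'.le) (right_mem_Icc.2 hf1u'.le) hf1u'.le
      rw [hWf1] at this
      exact this
    linarith
  -- Global monotonicity
  have hΔanti : AntitoneOn Δ (Ico f1 1) := by
    apply antitoneOn_of_deriv_nonpos (convex_Ico _ _) hΔc
    · intro x hx
      rw [interior_Ico] at hx
      exact (hΔd x hx).differentiableAt.differentiableWithinAt
    · intro x hx
      rw [interior_Ico] at hx
      have hxIco : x ∈ Ico f1 1 := ⟨hx.1.le, hx.2⟩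
      rw [(hΔd x hx).deriv]
      have hWx : 0 < W x := claimA x hxIco
      have hx0 : (0:ℝ) ≤ x := le_trans h10 hx.1.le
      have := hinv x hxIco hWx
      nlinarith
  have hΔle : ∀ u ∈ Ico f1 1, Δ u ≤ 0 := by
    intro u hu
    have := hΔanti (left_mem_Ico.2 h11) hu hu.1
    rw [hΔf1] at this
    exact this
  have hWmono : MonotoneOn W (Ico f1 1) := by
    apply monotoneOn_of_deriv_nonneg (convex_Ico _ _) hWc
    · intro x hx
      rw [interior_Ico] at hx
      exact (hWd x hx).differentiableAt.differentiableWithinAt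
    · intro x hx
      rw [interior_Ico] at hx
      have hxIco : x ∈ Ico f1 1 := ⟨hx.1.le, hx.2⟩
      rw [(hWd x hx).deriv]
      have hWx : 0 < W x := claimA x hxIco
      have hΔx : Δ x ≤ 0 := hΔle x hxIco
      have hx0 : (0:ℝ) ≤ x := le_trans h10 hx.1.le
      have h1u : (0:ℝ) ≤ 1 - x^2 := by nlinarith [hx.2]
      have hiv := hinv x hxIco hWx
      have hprod : β * (1 - x^2) *
          ((deriv^[2] f (zeta f x))⁻¹ - (deriv^[2] g (zeta g x))⁻¹) ≤ 0 :=
        mul_nonpos_of_nonneg_of_nonpos (mul_nonneg hβ.le h1u) hiv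
      nlinarith [hΔx, hprod]
  have hWge : ∀ u ∈ Ico f1 1, δ ≤ W u := by
    intro u hu
    have := hWmono (left_mem_Ico.2 h11) hu hu.1
    rw [hWf1] at this
    exact this
  -- Final contradiction: W is small near 1
  obtain ⟨Zf, hZf0, hZf⟩ := hF.small hβ h10 h11 (δ/2) (by positivity)
  obtain ⟨Zg, hZg0, hZg⟩ := hG.small hβ h10 h11 (δ/2) (by positivity)
  set u0 := max (max (deriv f Zf) (deriv g Zg)) f1 with hu0def
  have hu0I : u0 ∈ Ico f1 1 := by
    refine ⟨le_max_right _ _, ?_⟩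
    exact max_lt (max_lt (hF.ub h11 Zf hZf0) (hG.ub h11 Zg hZg0)) h11
  have h1 : Zf ≤ zeta f u0 := by
    by_contra h
    push_neg at h
    have hlt2 : deriv f (zeta f u0) < deriv f Zf :=
      hF.mono (hfspec u0 hu0I).1 hZf0 h
    rw [(hfspec u0 hu0I).2] at hlt2
    exact absurd hlt2 (not_lt.2 ((le_max_left _ _).trans (le_max_left _ _)))
  have h2 : Zg ≤ zeta g u0 := by
    by_contra h
    push_neg at h
    have hlt2 : deriv g (zeta g u0) < deriv g Zg :=
      hG.mono (hgspec u0 hu0I).1 hZg0 h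
    rw [(hgspec u0 hu0I).2] at hlt2
    exact absurd hlt2 (not_lt.2 ((le_max_right _ _).trans (le_max_left _ _)))
  have ha := hZf (zeta f u0) h1
  have hb := hvg u0 hu0I
  have : W u0 < δ := by
    simp only [hWdef]
    linarith
  linarith [hWge u0 hu0I]

end FalknerSkanAux

open FalknerSkanAux in
/-- Uniqueness of the normal solution to the Falkner–Skan boundary value problem. -/
theorem falkner_skan_uniqueness
    (β f0 f1 : ℝ) (hβ : 0 < β) (hf10 : 0 ≤ f1) (hf11 : f1 < 1)
    (f g : ℝ → ℝ)
    (hf : ContDiff ℝ 3 f) (hg : ContDiff ℝ 3 g)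
    (hodef : ∀ z ≥ (0:ℝ),
      deriv^[3] f z + f z * deriv^[2] f z + β * (1 - (deriv f z) ^ 2) = 0)
    (hodeg : ∀ z ≥ (0:ℝ),
      deriv^[3] g z + g z * deriv^[2] g z + β * (1 - (deriv g z) ^ 2) = 0)
    (hf0 : f 0 = f0) (hg0 : g 0 = f0)
    (hf'0 : deriv f 0 = f1) (hg'0 : deriv g 0 = f1)
    (hlimf : Tendsto (deriv f) atTop (nhds 1))
    (hlimg : Tendsto (deriv g) atTop (nhds 1))
    (hrangef : ∀ z > (0:ℝ), 0 < deriv f z ∧ deriv f z < 1)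
    (hrangeg : ∀ z > (0:ℝ), 0 < deriv g z ∧ deriv g z < 1)
    (hconvf : ∀ z ≥ (0:ℝ), 0 < deriv^[2] f z)
    (hconvg : ∀ z ≥ (0:ℝ), 0 < deriv^[2] g z) :
    EqOn f g (Ici 0) := by
  have hFf : FS β f1 f := ⟨hf, hodef, hf'0, hlimf, hrangef, hconvf⟩
  have hFg : FS β f1 g := ⟨hg, hodeg, hg'0, hlimg, hrangeg, hconvg⟩
  have h00 : f 0 = g 0 := by rw [hf0, hg0]
  have h2nd : deriv^[2] f 0 = deriv^[2] g 0 := by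
    rcases lt_trichotomy (deriv^[2] f 0) (deriv^[2] g 0) with h | h | h
    · exact absurd h (key hβ hf10 hf11 hFg hFf h00.symm)
    · exact h
    · exact absurd h (key hβ hf10 hf11 hFf hFg h00)
  -- Grönwall-type uniqueness
  intro z hz
  have hz0 : (0:ℝ) ≤ z := hz
  -- bounds on the compact interval
  obtain ⟨C1, hC1⟩ := isCompact_Icc.exists_bound_of_continuousOn
    (s := Icc (0:ℝ) z) hFf.smooth.continuous.continuousOn
  obtain ⟨C2, hC2⟩ := isCompact_Icc.exists_bound_of_continuousOn
    (s := Icc (0:ℝ) z) hFg.c2.continuousOn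
  have hC10 : 0 ≤ C1 := le_trans (norm_nonneg _) (hC1 0 (left_mem_Icc.2 hz0))
  have hC20 : 0 ≤ C2 := le_trans (norm_nonneg _) (hC2 0 (left_mem_Icc.2 hz0))
  set K := C1 + C2 + 2 * β + 1 with hKdef
  have hK1 : 1 ≤ K := by linarith
  set E : ℝ → ℝ × ℝ × ℝ :=
    fun t => (f t - g t, deriv f t - deriv g t, deriv^[2] f t - deriv^[2] g t) with hEdef
  set E' : ℝ → ℝ × ℝ × ℝ :=
    fun t => (deriv f t - deriv g t, deriv^[2] f t - deriv^[2] g t,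
      deriv^[3] f t - deriv^[3] g t) with hE'def
  have hcont : Continuous E := by
    rw [hEdef]
    exact (hf.continuous.sub hg.continuous).prodMk
      ((hFf.c1.sub hFg.c1).prodMk (hFf.c2.sub hFg.c2))
  have hderiv : ∀ x ∈ Ico 0 z, HasDerivWithinAt E (E' x) (Ici x) x := by
    intro x _
    have h1 : HasDerivAt (fun t => f t - g t) (deriv f x - deriv g x) x :=
      (hFf.hd1 x).sub (hFg.hd1 x)
    have h2 : HasDerivAt (fun t => deriv f t - deriv g t)
        (deriv^[2] f x - deriv^[2] g x) x := (hFf.hd2 x).sub (hFg.hd2 x)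
    have h3 : HasDerivAt (fun t => deriv^[2] f t - deriv^[2] g t)
        (deriv^[3] f x - deriv^[3] g x) x := (hFf.hd3 x).sub (hFg.hd3 x)
    have := h1.prodMk (h2.prodMk h3)
    rw [hEdef, hE'def]
    exact this.hasDerivWithinAt
  have h0 : ‖E 0‖ ≤ 0 := by
    have hE0 : E 0 = 0 := by
      rw [hEdef]
      simp only [h00, hf'0, hg'0, h2nd, sub_self]
      rfl
    rw [hE0, norm_zero]
  have hbound : ∀ x ∈ Ico 0 z, ‖E' x‖ ≤ K * ‖E x‖ + 0 := by
    intro x hx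
    have hx0 : (0:ℝ) ≤ x := hx.1
    have hxI : x ∈ Icc 0 z := ⟨hx0, hx.2.le⟩
    have hN : ‖E x‖ = max |f x - g x|
        (max |deriv f x - deriv g x| |deriv^[2] f x - deriv^[2] g x|) := by
      rw [hEdef]
      simp [Prod.norm_def, Real.norm_eq_abs]
    have hN' : ‖E' x‖ = max |deriv f x - deriv g x|
        (max |deriv^[2] f x - deriv^[2] g x| |deriv^[3] f x - deriv^[3] g x|) := by
      rw [hE'def]
      simp [Prod.norm_def, Real.norm_eq_abs]
    have hNn : (0:ℝ) ≤ ‖E x‖ := norm_nonneg _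
    have ha : |f x - g x| ≤ ‖E x‖ := by rw [hN]; exact le_max_left _ _
    have hb : |deriv f x - deriv g x| ≤ ‖E x‖ := by
      rw [hN]; exact le_trans (le_max_left _ _) (le_max_right _ _)
    have hc : |deriv^[2] f x - deriv^[2] g x| ≤ ‖E x‖ := by
      rw [hN]; exact le_trans (le_max_right _ _) (le_max_right _ _)
    have h3 : deriv^[3] f x - deriv^[3] g x
        = (-(f x)) * (deriv^[2] f x - deriv^[2] g x)
          + (-(deriv^[2] g x)) * (f x - g x)
          + (β * (deriv f x + deriv g x)) * (deriv f x - deriv g x) := by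
      linear_combination (hodef x hx0) - (hodeg x hx0)
    have e1 : |(-(f x))| ≤ C1 := by
      rw [abs_neg, ← Real.norm_eq_abs]; exact hC1 x hxI
    have e2 : |(-(deriv^[2] g x))| ≤ C2 := by
      rw [abs_neg, ← Real.norm_eq_abs]; exact hC2 x hxI
    have e3 : |β * (deriv f x + deriv g x)| ≤ 2 * β := by
      rw [abs_mul, abs_of_pos hβ]
      have l1 := hFf.lb0 hf10 x hx0
      have l2 := hFf.ub hf11 x hx0
      have l3 := hFg.lb0 hf10 x hx0
      have l4 := hFg.ub hf11 x hx0
      have : |deriv f x + deriv g x| ≤ 2 := abs_le.2 ⟨by linarith, by linarith⟩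
      nlinarith
    have hr : |deriv^[3] f x - deriv^[3] g x| ≤ C1 * ‖E x‖ + C2 * ‖E x‖ + (2*β) * ‖E x‖ := by
      rw [h3]
      refine (abs_add_three _ _ _).trans ?_
      rw [abs_mul, abs_mul, abs_mul]
      have t1 : |(-(f x))| * |deriv^[2] f x - deriv^[2] g x| ≤ C1 * ‖E x‖ :=
        mul_le_mul e1 hc (abs_nonneg _) hC10
      have t2 : |(-(deriv^[2] g x))| * |f x - g x| ≤ C2 * ‖E x‖ :=
        mul_le_mul e2 ha (abs_nonneg _) hC20
      have t3 : |β * (deriv f x + deriv g x)| * |deriv f x - deriv g x|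
          ≤ (2*β) * ‖E x‖ :=
        mul_le_mul e3 hb (abs_nonneg _) (by linarith)
      linarith
    rw [hN', add_zero]
    have hKN : ‖E x‖ ≤ K * ‖E x‖ := le_mul_of_one_le_left hNn hK1
    refine max_le (le_trans hb hKN) (max_le (le_trans hc hKN) ?_)
    have : C1 * ‖E x‖ + C2 * ‖E x‖ + (2*β) * ‖E x‖ ≤ K * ‖E x‖ := by
      rw [hKdef]; nlinarith
    linarith
  have hgron := norm_le_gronwallBound_of_norm_deriv_right_le
    hcont.continuousOn hderiv h0 hbound z ⟨hz0, le_rfl⟩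
  rw [gronwallBound_ε0_δ0] at hgron
  have hEz : E z = 0 := norm_le_zero_iff.1 hgron
  have : f z - g z = 0 := by
    have := congrArg Prod.fst hEz
    rw [hEdef] at this
    simpa using this
  exact sub_eq_zero.1 this
end
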